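/- In a semi-FTvN system, if a and b strongly commute, then a and b commute relative to any closed subgroup G of the automorphism group: ⟨Da, b⟩ = 0 for every D ∈ Lie(G). -/

import Mathlib

open scoped RealInnerProductSpace Matrix

set_option maxHeartbeats 1000000
set_option synthInstance.maxHeartbeats 400000

theorem stmt9 {V W : Type*} [NormedAddCommGroup V] [InnerProductSpace ℝ V]
    [NormedAddCommGroup W] [InnerProductSpace ℝ W] (lam : V → W)
    (h1 : ∀ x : V, ‖lam x‖ = ‖x‖)
    (h2 : ∀ x y : V, ⟪x, y⟫ ≤ ⟪lam x, lam y⟫)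
    (G : Set (V →L[ℝ] V)) (hGclosed : IsClosed G)
    (hGone : (1 : V →L[ℝ] V) ∈ G)
    (hGmul : ∀ A ∈ G, ∀ B ∈ G, A * B ∈ G)
    (hGinv : ∀ A ∈ G, ∃ B ∈ G, A * B = 1 ∧ B * A = 1)
    (hGaut : ∀ A ∈ G, ∀ x : V, lam (A x) = lam x)
    (a b : V) (hsc : ⟪a, b⟫ = ⟪lam a, lam b⟫)
    (D : V →L[ℝ] V) (hD : ∀ t : ℝ, NormedSpace.exp (t • D) ∈ G) :
    ⟪D a, b⟫ = 0 := by
  by_cases hS : ∀ t : ℝ, Summable (fun n : ℕ => ((n.factorial : ℝ))⁻¹ • (t • D) ^ n)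
  case neg =>
    push_neg at hS
    obtain ⟨t₀, ht₀⟩ := hS
    have hexp0 : NormedSpace.exp (t₀ • D) = 0 := by
      rw [NormedSpace.exp_eq_tsum (𝕂 := ℝ)]
      exact tsum_eq_zero_of_not_summable ht₀
    have h0G : (0 : V →L[ℝ] V) ∈ G := hexp0 ▸ hD t₀
    obtain ⟨B, hB, h01, h10⟩ := hGinv 0 h0G
    have h10' : (1 : V →L[ℝ] V) = 0 := by rw [← h01, zero_mul]
    have hb : b = 0 := by
      have := congrArg (fun A : V →L[ℝ] V => A b) h10'
      simpa using this
    simp [hb]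
  case pos =>
    set c : ℕ → ℝ := fun n => ⟪b, (D ^ n) a⟫ with hc
    set L : (V →L[ℝ] V) →L[ℝ] ℝ :=
      (innerSL ℝ b).comp (ContinuousLinearMap.apply ℝ V a) with hL
    have hLapp : ∀ A : V →L[ℝ] V, L A = ⟪b, A a⟫ := fun A => rfl
    set g : ℕ → ℝ → ℝ := fun n t => ((n.factorial : ℝ))⁻¹ * t ^ n * c n with hg
    set g' : ℕ → ℝ → ℝ := fun n t => ((n.factorial : ℝ))⁻¹ * ((n : ℝ) * t ^ (n - 1)) * c n
      with hg'
    have hLexp : ∀ t : ℝ, ⟪b, (NormedSpace.exp (t • D)) a⟫ = ∑' n : ℕ, g n t := by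
      intro t
      rw [← hLapp, NormedSpace.exp_eq_tsum (𝕂 := ℝ), L.map_tsum (hS t)]
      congr 1
      funext n
      rw [L.map_smul, hLapp, smul_pow]
      simp only [ContinuousLinearMap.smul_apply, real_inner_smul_right,
        smul_eq_mul, hg, hc]
      ring
    set F : ℝ → ℝ := fun t => ∑' n : ℕ, g n t with hF
    -- global maximum of F at 0
    have hmaxall : ∀ t : ℝ, F t ≤ F 0 := by
      intro t
      have e0 : F 0 = ⟪a, b⟫ := by
        have h0 : F 0 = ⟪b, (NormedSpace.exp ((0:ℝ) • D)) a⟫ := (hLexp 0).symm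
        rw [h0]
        simp [NormedSpace.exp_zero, real_inner_comm]
      have ht' : F t = ⟪b, (NormedSpace.exp (t • D)) a⟫ := (hLexp t).symm
      calc F t = ⟪(NormedSpace.exp (t • D)) a, b⟫ := by
              rw [ht', real_inner_comm]
        _ ≤ ⟪lam ((NormedSpace.exp (t • D)) a), lam b⟫ := h2 _ _
        _ = ⟪lam a, lam b⟫ := by rw [hGaut _ (hD t)]
        _ = ⟪a, b⟫ := hsc.symm
        _ = F 0 := e0.symm
    have hmax : IsLocalMax F 0 := Filter.Eventually.of_forall hmaxall
    -- derivative of F at 0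
    have hcbound : ∀ n : ℕ, 1 ≤ n → |c n| ≤ ‖D‖ ^ n * (‖a‖ * ‖b‖) := by
      intro n hn
      have h1' : |c n| ≤ ‖b‖ * ‖(D ^ n) a‖ := by
        simpa [hc] using abs_real_inner_le_norm b ((D ^ n) a)
      have h2' : ‖(D ^ n) a‖ ≤ ‖D ^ n‖ * ‖a‖ := (D ^ n).le_opNorm a
      have h3' : ‖D ^ n‖ ≤ ‖D‖ ^ n := norm_pow_le' D hn
      calc |c n| ≤ ‖b‖ * ‖(D ^ n) a‖ := h1'
        _ ≤ ‖b‖ * (‖D ^ n‖ * ‖a‖) := by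
            exact mul_le_mul_of_nonneg_left h2' (norm_nonneg b)
        _ ≤ ‖b‖ * (‖D‖ ^ n * ‖a‖) := by gcongr
        _ = ‖D‖ ^ n * (‖a‖ * ‖b‖) := by ring
    set u : ℕ → ℝ := fun n => ((n.factorial : ℝ))⁻¹ * (n : ℝ) * (‖D‖ ^ n * (‖a‖ * ‖b‖))
      with hu
    have husum : Summable u := by
      have hbase : Summable
          (fun n : ℕ => (‖D‖ * (‖a‖ * ‖b‖)) * (‖D‖ ^ n / (n.factorial : ℝ))) :=
        (Real.summable_pow_div_factorial ‖D‖).mul_left (‖D‖ * (‖a‖ * ‖b‖))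
      have hshift : Summable (fun n : ℕ => u (n + 1)) := by
        refine hbase.congr fun n => ?_
        rw [hu]
        simp only [Nat.factorial_succ, Nat.cast_mul, Nat.cast_add, Nat.cast_one,
          pow_succ]
        have hne : ((n.factorial : ℝ)) ≠ 0 := Nat.cast_ne_zero.mpr (Nat.factorial_ne_zero n)
        have hne2 : ((n : ℝ) + 1) ≠ 0 := by positivity
        field_simp
      exact (summable_nat_add_iff 1).mp hshift
    have hgderiv : ∀ (n : ℕ) (y : ℝ), y ∈ Set.Ioo (-1 : ℝ) 1 →
        HasDerivAt (g n) (g' n y) y := by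
      intro n y _
      exact ((hasDerivAt_pow n y).const_mul ((n.factorial : ℝ))⁻¹).mul_const (c n)
    have hgbound : ∀ (n : ℕ) (y : ℝ), y ∈ Set.Ioo (-1 : ℝ) 1 → ‖g' n y‖ ≤ u n := by
      intro n y hy
      rcases Nat.eq_zero_or_pos n with hn | hn
      · simp [hg', hu, hn]
      · have hyle : |y| ≤ 1 := by
          rw [abs_le]; exact ⟨hy.1.le, hy.2.le⟩
        have hy1 : |y ^ (n - 1)| ≤ 1 := by
          rw [abs_pow]
          exact pow_le_one₀ (abs_nonneg y) hyle
        have hcb := hcbound n hn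
        have hfac : (0:ℝ) ≤ ((n.factorial : ℝ))⁻¹ := by positivity
        have hnn : (0:ℝ) ≤ (n : ℝ) := by positivity
        have e1 : ‖g' n y‖ =
            ((n.factorial : ℝ))⁻¹ * ((n : ℝ) * |y ^ (n - 1)|) * |c n| := by
          simp only [hg', Real.norm_eq_abs, abs_mul]
          rw [abs_of_nonneg hfac, abs_of_nonneg hnn]
        rw [e1]
        calc ((n.factorial : ℝ))⁻¹ * ((n : ℝ) * |y ^ (n - 1)|) * |c n|
            ≤ ((n.factorial : ℝ))⁻¹ * ((n : ℝ) * 1) * (‖D‖ ^ n * (‖a‖ * ‖b‖)) :=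
              mul_le_mul
                (mul_le_mul_of_nonneg_left
                  (mul_le_mul_of_nonneg_left hy1 hnn) hfac)
                hcb (abs_nonneg _) (by positivity)
          _ = u n := by simp only [hu]; ring
    have hg0sum : Summable (fun n => g n 0) := by
      refine summable_of_ne_finset_zero (s := {0}) ?_
      intro n hn
      have : n ≠ 0 := by simpa using hn
      simp [hg, zero_pow this]
    have hder : HasDerivAt F (∑' n : ℕ, g' n 0) 0 :=
      hasDerivAt_tsum_of_isPreconnected husum isOpen_Ioo
        (convex_Ioo (-1 : ℝ) 1).isPreconnected hgderiv hgbound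
        (by norm_num : (0:ℝ) ∈ Set.Ioo (-1:ℝ) 1) hg0sum
        (by norm_num : (0:ℝ) ∈ Set.Ioo (-1:ℝ) 1)
    have hsum1 : (∑' n : ℕ, g' n 0) = c 1 := by
      rw [tsum_eq_single 1]
      · simp [hg']
      · intro n hn
        rcases Nat.eq_zero_or_pos n with h | h
        · simp [hg', h]
        · have h2n : 2 ≤ n := by omega
          have : n - 1 ≠ 0 := by omega
          simp [hg', zero_pow this]
    have hzero : (∑' n : ℕ, g' n 0) = 0 := hmax.hasDerivAt_eq_zero hder
    have : c 1 = 0 := by rw [← hsum1, hzero]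
    rw [hc] at this
    simp only [pow_one] at this
    rw [real_inner_comm]
    exact this
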